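/- Every Suleĭmanova spectrum is realizable by an irreducible nonnegative matrix. That is, if λ_1 > 0, λ_2, ..., λ_n ≤ 0 and λ_1 + λ_2 + ... + λ_n ≥ 0, then there exists an n×n irreducible nonnegative matrix with eigenvalues exactly λ_1, ..., λ_n. -/
import Mathlib


open Matrix Polynomial

def MatNonneg {n : ℕ} (A : Matrix (Fin n) (Fin n) ℝ) : Prop := ∀ i j, 0 ≤ A i j

def MatIrred {n : ℕ} (A : Matrix (Fin n) (Fin n) ℝ) : Prop :=
  ∀ i j : Fin n, i ≠ j → Relation.TransGen (fun a b => 0 < A a b) i j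

open Finset


lemma det_comp {R : Type*} [CommRing R] (N : ℕ) (x : R) (c : ℕ → R) :
    Matrix.det (Matrix.of fun i j : Fin N =>
      (if i = j then x else 0) - (if (j : ℕ) + 1 = (i : ℕ) then 1
        else if (j : ℕ) + 1 = N then c (i : ℕ) else 0))
    = x ^ N - ∑ k ∈ Finset.range N, c k * x ^ k := by
  induction N generalizing c with
  | zero => simp [Matrix.det_isEmpty]
  | succ N ih =>
    cases N with
    | zero => simp [Matrix.det_fin_one]
    | succ M =>
      rw [Matrix.det_succ_row_zero]
      set A := (Matrix.of fun i j : Fin (M+2) =>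
              (if i = j then x else 0) - (if (j : ℕ) + 1 = (i : ℕ) then 1
                else if (j : ℕ) + 1 = (M+2) then c (i : ℕ) else 0)) with hA
      have h0l : (0 : Fin (M + 2)) ≠ Fin.last (M + 1) := by
        intro h
        have := congrArg Fin.val h
        simp [Fin.last] at this
      have hsub : ∑ j : Fin (M+2), (-1 : R) ^ (j : ℕ) * A 0 j *
              (A.submatrix Fin.succ j.succAbove).det
          = ∑ j ∈ ({0, Fin.last (M+1)} : Finset (Fin (M+2))), (-1 : R) ^ (j : ℕ) * A 0 j *
              (A.submatrix Fin.succ j.succAbove).det := by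
        refine (Finset.sum_subset (Finset.subset_univ _) ?_).symm
        intro j _ hj
        simp only [Finset.mem_insert, Finset.mem_singleton, not_or] at hj
        obtain ⟨hj0, hjl⟩ := hj
        have e1 : ¬((0 : Fin (M+2)) = j) := fun h => hj0 h.symm
        have e3 : ¬((j : ℕ) + 1 = M + 2) := by
          have : (j : ℕ) ≠ M + 1 := fun h => hjl (Fin.ext h)
          omega
        simp only [hA, Matrix.of_apply, if_neg e1, if_neg e3,
          if_neg (by simp : ¬((j:ℕ)+1 = ((0 : Fin (M+2)):ℕ)))]
        ring
      rw [hsub, Finset.sum_pair h0l]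
      -- entry at 0
      have hE0 : A 0 0 = x := by
        have e2 : ¬(((0 : Fin (M+2)):ℕ) + 1 = ((0 : Fin (M+2)):ℕ)) := by simp
        have e3 : ¬(((0 : Fin (M+2)):ℕ) + 1 = M + 2) := by simp
        simp only [hA, Matrix.of_apply, if_pos rfl, if_neg e2, if_neg e3]
        simp
      have hEl : A 0 (Fin.last (M+1)) = -(c 0) := by
        have e2 : ¬(((Fin.last (M+1) : Fin (M+2)):ℕ) + 1 = ((0 : Fin (M+2)):ℕ)) := by
          simp [Fin.val_last]
        have e3 : (((Fin.last (M+1) : Fin (M+2)):ℕ) + 1 = M + 2) := by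
          simp [Fin.val_last]
        simp only [hA, Matrix.of_apply, if_neg h0l, if_neg e2, if_pos e3]
        simp
      -- minor at 0
      have hm0 : (A.submatrix Fin.succ (0 : Fin (M+2)).succAbove).det
          = x ^ (M+1) - ∑ k ∈ Finset.range (M+1), c (k+1) * x ^ k := by
        have heq : (A.submatrix Fin.succ (0 : Fin (M+2)).succAbove)
            = (Matrix.of fun i j : Fin (M+1) =>
                (if i = j then x else 0) - (if (j : ℕ) + 1 = (i : ℕ) then 1
                  else if (j : ℕ) + 1 = (M+1) then (fun k => c (k+1)) (i : ℕ) else 0)) := by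
          ext i j
          simp only [hA, Matrix.submatrix_apply, Matrix.of_apply, Fin.zero_succAbove, Fin.val_succ]
          congr 1
          · congr 1
            simp [Fin.succ_inj]
          · congr 1
            · simp only [eq_iff_iff]; omega
            · congr 1
              simp only [eq_iff_iff]; omega
        rw [heq]
        exact ih fun k => c (k+1)
      -- minor at last
      have hml : (A.submatrix Fin.succ (Fin.last (M+1)).succAbove).det = (-1) ^ (M+1) := by
        have hU : (A.submatrix Fin.succ (Fin.last (M+1)).succAbove).BlockTriangular id := by
          intro i j hij
          have hij' : (j : ℕ) < (i : ℕ) := hij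
          simp only [hA, Matrix.submatrix_apply, Matrix.of_apply, Fin.succAbove_last, Fin.val_succ,
            Fin.coe_castSucc]
          have e1 : ¬(Fin.succ i = Fin.castSucc j) := by
            intro h
            have := congrArg Fin.val h
            simp at this
            omega
          have e2 : ¬((j:ℕ) + 1 = (i:ℕ) + 1) := by omega
          have e3 : ¬((j:ℕ) + 1 = M + 2) := by omega
          rw [if_neg e1, if_neg e2, if_neg e3]
          ring
        rw [Matrix.det_of_upperTriangular hU]
        have hd : ∀ i : Fin (M+1), (A.submatrix Fin.succ (Fin.last (M+1)).succAbove) i i = -1 := by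
          intro i
          simp only [hA, Matrix.submatrix_apply, Matrix.of_apply, Fin.succAbove_last]
          have e1 : ¬(Fin.succ i = Fin.castSucc i) := by
            intro h
            have := congrArg Fin.val h
            simp at this
          rw [if_neg e1, if_pos (by simp)]
          ring
        rw [Finset.prod_congr rfl (fun i _ => hd i)]
        simp [Finset.prod_const]
      rw [hE0, hEl, hm0, hml]
      have hlv : ((Fin.last (M+1) : Fin (M+2)) : ℕ) = M + 1 := rfl
      rw [hlv]
      have hsq : ((-1 : R) ^ (M+1)) * ((-1 : R) ^ (M+1)) = 1 := by
        rw [← pow_add]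
        simp [pow_add, pow_mul, ← two_mul]
      rw [Finset.sum_range_succ' (fun k => c k * x ^ k) (M+1)]
      have hdist : x * (x ^ (M+1) - ∑ k ∈ Finset.range (M+1), c (k+1) * x ^ k)
          = x ^ (M+2) - ∑ k ∈ Finset.range (M+1), c (k+1) * x ^ (k+1) := by
        rw [mul_sub, Finset.mul_sum]
        congr 1
        · ring
        · exact Finset.sum_congr rfl fun k _ => by ring
      calc (-1:R) ^ ((0 : Fin (M+2)):ℕ) * x * (x ^ (M+1) - ∑ k ∈ Finset.range (M+1), c (k+1) * x ^ k)
            + (-1) ^ (M+1) * -(c 0) * (-1) ^ (M+1)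
          = x * (x ^ (M+1) - ∑ k ∈ Finset.range (M+1), c (k+1) * x ^ k)
            + (((-1:R) ^ (M+1)) * ((-1 : R) ^ (M+1))) * (-(c 0)) := by
            simp only [Fin.val_zero, pow_zero, one_mul]
            ring
        _ = x ^ (M+2) - (∑ k ∈ Finset.range (M+1), c (k+1) * x ^ (k+1) + c 0 * x ^ 0) := by
            rw [hsq, hdist]
            ring


def compM (N : ℕ) (c : ℕ → ℝ) : Matrix (Fin N) (Fin N) ℝ :=
  Matrix.of fun i j => if (j : ℕ) + 1 = (i : ℕ) then 1 else if (j : ℕ) + 1 = N then c (i : ℕ) else 0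

lemma charpoly_compM (N : ℕ) (c : ℕ → ℝ) :
    (compM N c).charpoly = X ^ N - ∑ k ∈ Finset.range N, C (c k) * X ^ k := by
  have h : charmatrix (compM N c) = Matrix.of fun i j : Fin N =>
      (if i = j then (X : ℝ[X]) else 0) - (if (j : ℕ) + 1 = (i : ℕ) then 1
        else if (j : ℕ) + 1 = N then (fun k => C (c k)) (i : ℕ) else 0) := by
    ext i j
    rw [charmatrix_apply]
    simp only [Matrix.diagonal_apply, Matrix.of_apply, compM]
    congr 1
    rw [apply_ite C, apply_ite C]
    simp
  rw [Matrix.charpoly, h]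
  exact det_comp N X (fun k => C (c k))

lemma charpoly_conj_gen {n : Type*} [Fintype n] [DecidableEq n] (P Q A : Matrix n n ℝ)
    (hPQ : P * Q = 1) (hQP : Q * P = 1) :
    (P * A * Q).charpoly = A.charpoly := by
  have hmap : ∀ M N : Matrix n n ℝ,
      ((M * N).map (C : ℝ → ℝ[X])) = M.map C * N.map C := fun M N => by
    simpa [RingHom.mapMatrix_apply] using
      (map_mul (RingHom.mapMatrix (C : ℝ →+* ℝ[X])) M N)
  have hone : (1 : Matrix n n ℝ).map (C : ℝ → ℝ[X]) = 1 :=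
    Matrix.map_one _ (map_zero C) (map_one C)
  have h1 : P.map (C : ℝ → ℝ[X]) * Q.map C = 1 := by rw [← hmap, hPQ, hone]
  have h2 : Q.map (C : ℝ → ℝ[X]) * P.map C = 1 := by rw [← hmap, hQP, hone]
  have hcomm : P.map (C : ℝ → ℝ[X]) * Matrix.scalar n (X : ℝ[X]) =
      Matrix.scalar n (X : ℝ[X]) * P.map C :=
    ((Matrix.scalar_commute (X : ℝ[X]) (fun r => Commute.all X r) (P.map C))).symm
  have hc : charmatrix (P * A * Q) = P.map C * charmatrix A * Q.map C := by
    rw [charmatrix, charmatrix, Matrix.mul_sub, Matrix.sub_mul]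
    congr 1
    · rw [hcomm, mul_assoc, h1, mul_one]
    · rw [RingHom.mapMatrix_apply, RingHom.mapMatrix_apply, hmap, hmap]
  rw [Matrix.charpoly, Matrix.charpoly, hc, Matrix.det_mul, Matrix.det_mul]
  have : (P.map (C : ℝ → ℝ[X])).det * (Q.map C).det = 1 := by
    rw [← Matrix.det_mul, h1, Matrix.det_one]
  calc (P.map (C : ℝ → ℝ[X])).det * (charmatrix A).det * (Q.map C).det
      = ((P.map (C : ℝ → ℝ[X])).det * (Q.map C).det) * (charmatrix A).det := by ring
    _ = (charmatrix A).det := by rw [this, one_mul]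

lemma charpoly_zero (z : ℕ) : (0 : Matrix (Fin z) (Fin z) ℝ).charpoly = X ^ z := by
  have h : (0 : Matrix (Fin z) (Fin z) ℝ).BlockTriangular id := by
    intro i j _
    simp
  rw [Matrix.charpoly_of_upperTriangular _ h]
  simp

lemma keyA {ι : Type*} [DecidableEq ι] (β : ι → ℝ) (lam : ℝ) (s : Finset ι) :
    (∀ i ∈ s, 0 ≤ β i) → ((∑ i ∈ s, β i) ≤ lam) →
    (∀ k, 0 ≤ (X ^ (s.card + 1) - (X - C lam) * ∏ i ∈ s, (X + C (β i))).coeff k) ∧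
      (X ^ (s.card + 1) - (X - C lam) * ∏ i ∈ s, (X + C (β i))).coeff s.card
        = lam - ∑ i ∈ s, β i := by
  induction s using Finset.induction_on with
  | empty =>
    intro _ hlam
    simp only [Finset.card_empty, Finset.prod_empty, Finset.sum_empty, mul_one, pow_one,
      zero_add, sub_sub_cancel, sub_zero]
    constructor
    · intro k
      rw [coeff_C]
      split
      · simpa using hlam
      · exact le_refl 0
    · exact coeff_C_zero
  | @insert a s ha ih =>
    intro hb hlam
    have hba : 0 ≤ β a := hb a (Finset.mem_insert_self a s)
    have hbs : ∀ i ∈ s, 0 ≤ β i := fun i hi => hb i (Finset.mem_insert_of_mem hi)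
    have hsum : ∑ i ∈ s, β i ≤ lam := by
      rw [Finset.sum_insert ha] at hlam
      linarith
    obtain ⟨h1, h2⟩ := ih hbs hsum
    set q : Polynomial ℝ := ∏ i ∈ s, (X + C (β i)) with hq
    set r : Polynomial ℝ := X ^ (s.card + 1) - (X - C lam) * q with hr
    -- degree facts
    have hmon : ((X - C lam) * q).Monic :=
      (monic_X_sub_C lam).mul (monic_prod_of_monic _ _ fun i _ => monic_X_add_C (β i))
    have hdeg : ((X - C lam) * q).natDegree = s.card + 1 := by
      rw [(monic_X_sub_C lam).natDegree_mul (monic_prod_of_monic _ _ fun i _ => monic_X_add_C (β i))]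
      rw [natDegree_X_sub_C, natDegree_prod_of_monic _ _ fun i _ => monic_X_add_C (β i)]
      simp [natDegree_X_add_C, add_comm]
    have hrtop : r.coeff (s.card + 1) = 0 := by
      rw [hr, coeff_sub, coeff_X_pow, if_pos rfl, ← hdeg, hmon.coeff_natDegree]
      ring
    -- the key identity
    have hcard : (insert a s).card = s.card + 1 := Finset.card_insert_of_notMem ha
    have hprod : ∏ i ∈ insert a s, (X + C (β i)) = (X + C (β a)) * q :=
      Finset.prod_insert ha
    have hkey : X ^ ((insert a s).card + 1) - (X - C lam) * ∏ i ∈ insert a s, (X + C (β i))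
        = (X + C (β a)) * r - C (β a) * X ^ (s.card + 1) := by
      rw [hcard, hprod, hr]
      ring
    have hco : ∀ k, (X ^ ((insert a s).card + 1)
        - (X - C lam) * ∏ i ∈ insert a s, (X + C (β i))).coeff k
        = (X * r).coeff k + β a * r.coeff k - β a * (X ^ (s.card + 1)).coeff k := by
      intro k
      rw [hkey]
      simp only [coeff_sub, coeff_add, add_mul, coeff_C_mul]
    have hXr0 : (X * r).coeff 0 = 0 := by
      rw [Polynomial.mul_coeff_zero, coeff_X_zero, zero_mul]
    constructor
    · intro k
      rw [hco]
      cases k with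
      | zero =>
        rw [hXr0, coeff_X_pow, if_neg (by omega)]
        have := h1 0
        nlinarith
      | succ j =>
        rw [Polynomial.coeff_X_mul, coeff_X_pow]
        by_cases hj : j = s.card
        · subst hj
          rw [if_pos rfl, h2, hrtop]
          rw [Finset.sum_insert ha] at hlam
          linarith
        · rw [if_neg (by omega)]
          have := h1 j
          have := h1 (j+1)
          nlinarith
    · have h3 := hco (s.card + 1)
      rw [hcard] at h3 ⊢
      rw [h3, Polynomial.coeff_X_mul, coeff_X_pow, if_pos rfl, h2, hrtop, Finset.sum_insert ha]
      ring

section blowup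
variable (m z : ℕ) (a : ℕ → ℝ)

private def cc : ℕ → ℕ → ℝ := fun p q => if q + 1 = p then 1 else if q = m then a p else 0

private def ft : Fin (m+1) ⊕ Fin z → ℕ := Sum.elim (fun p => (p : ℕ)) (fun _ => m)

private noncomputable def Bt : Matrix (Fin (m+1) ⊕ Fin z) (Fin (m+1) ⊕ Fin z) ℝ :=
  Matrix.of fun x y => (if ft m z y = m then ((z+1:ℕ):ℝ)⁻¹ else 1) * cc m a (ft m z x) (ft m z y)

private def S0 : Matrix (Fin (m+1) ⊕ Fin z) (Fin (m+1) ⊕ Fin z) ℝ :=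
  Matrix.of fun x y => Sum.elim (fun p => if x = Sum.inl p then (1:ℝ) else 0)
    (fun q => (if x = Sum.inl (Fin.last m) then (1:ℝ) else 0)
      - (if x = Sum.inr q then (1:ℝ) else 0)) y

lemma S0_mul_S0 : S0 m z * S0 m z = 1 := by
  ext x y
  rw [Matrix.mul_apply]
  cases y with
  | inl p =>
    simp only [S0, Matrix.of_apply, Sum.elim_inl, mul_ite, mul_one, mul_zero,
      Finset.sum_ite_eq' Finset.univ, Finset.mem_univ, if_true]
    rw [Matrix.one_apply]
  | inr q =>
    simp only [S0, Matrix.of_apply, Sum.elim_inr, mul_sub, mul_ite, mul_one, mul_zero,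
      Finset.sum_sub_distrib, Finset.sum_ite_eq' Finset.univ, Finset.mem_univ, if_true]
    simp only [Sum.elim_inl, Sum.elim_inr]
    rw [Matrix.one_apply]
    by_cases hx : x = Sum.inr q
    · subst hx
      simp
    · simp [hx]


private lemma BtS0_inr (x : Fin (m+1) ⊕ Fin z) (q : Fin z) :
    (Bt m z a * S0 m z) x (Sum.inr q) = 0 := by
  rw [Matrix.mul_apply]
  simp only [S0, Matrix.of_apply, Sum.elim_inr, mul_sub, mul_ite, mul_one, mul_zero,
    Finset.sum_sub_distrib, Finset.sum_ite_eq' Finset.univ, Finset.mem_univ, if_true]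
  simp [Bt, ft, Fin.val_last]

private lemma BtS0_inl (x : Fin (m+1) ⊕ Fin z) (p : Fin (m+1)) :
    (Bt m z a * S0 m z) x (Sum.inl p) = Bt m z a x (Sum.inl p) := by
  rw [Matrix.mul_apply]
  simp only [S0, Matrix.of_apply, Sum.elim_inl, mul_ite, mul_one, mul_zero,
    Finset.sum_ite_eq' Finset.univ, Finset.mem_univ, if_true]

private lemma T12 : (S0 m z * Bt m z a * S0 m z).toBlocks₁₂ = 0 := by
  ext p q
  rw [Matrix.toBlocks₁₂, Matrix.of_apply, mul_assoc, Matrix.mul_apply]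
  simp [BtS0_inr]

private lemma T22 : (S0 m z * Bt m z a * S0 m z).toBlocks₂₂ = 0 := by
  ext p q
  rw [Matrix.toBlocks₂₂, Matrix.of_apply, mul_assoc, Matrix.mul_apply]
  simp [BtS0_inr]


private lemma T11 : (S0 m z * Bt m z a * S0 m z).toBlocks₁₁ =
    Matrix.diagonal (fun p : Fin (m+1) => if p = Fin.last m then ((z+1:ℕ):ℝ) else 1)
      * compM (m+1) a
      * Matrix.diagonal (fun p : Fin (m+1) => if p = Fin.last m then ((z+1:ℕ):ℝ)⁻¹ else 1) := by
  ext p p'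
  rw [Matrix.toBlocks₁₁]
  simp only [Matrix.of_apply]
  rw [mul_assoc, Matrix.mul_apply, Fintype.sum_sum_type]
  simp only [BtS0_inl, BtS0_inr]
  simp only [S0, Matrix.of_apply, Sum.elim_inl, Sum.elim_inr, Sum.inl.injEq]
  rw [Matrix.mul_diagonal, Matrix.diagonal_mul]
  simp only [ite_mul, one_mul, zero_mul, Finset.sum_ite_eq, Finset.mem_univ, if_true,
    Finset.sum_const, Finset.card_univ, Fintype.card_fin, nsmul_eq_mul]
  by_cases hp : p = Fin.last m <;> by_cases hp' : p' = Fin.last m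
  · simp only [hp, hp', if_true]
    simp [Bt, compM, cc, ft, Fin.val_last]
    push_cast
    ring
  · have hv' : ¬((p':ℕ) = m) := by simpa [Fin.ext_iff, Fin.val_last] using hp'
    simp only [hp, hp', if_true, if_false]
    simp [Bt, compM, cc, ft, Fin.val_last, hv', Nat.add_right_cancel_iff]
    push_cast
    split_ifs <;> ring
  · have hv : ¬((p:ℕ) = m) := by simpa [Fin.ext_iff, Fin.val_last] using hp
    simp only [hp, hp', if_true, if_false]
    simp [Bt, compM, cc, ft, Fin.val_last, hv, Nat.add_right_cancel_iff]
    split_ifs <;> ring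
  · have hv : ¬((p:ℕ) = m) := by simpa [Fin.ext_iff, Fin.val_last] using hp
    have hv' : ¬((p':ℕ) = m) := by simpa [Fin.ext_iff, Fin.val_last] using hp'
    simp only [hp, hp', if_false]
    simp [Bt, compM, cc, ft, Fin.val_last, hv, hv', Nat.add_right_cancel_iff]





private lemma charpoly_Bt :
    (Bt m z a).charpoly = (X ^ (m+1) - ∑ k ∈ Finset.range (m+1), C (a k) * X ^ k) * X ^ z := by
  have hSS := S0_mul_S0 m z
  have hDD' : Matrix.diagonal (fun p : Fin (m+1) => if p = Fin.last m then ((z+1:ℕ):ℝ) else 1)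
      * Matrix.diagonal (fun p : Fin (m+1) => if p = Fin.last m then ((z+1:ℕ):ℝ)⁻¹ else 1) = 1 := by
    have hz : ((z+1:ℕ):ℝ) ≠ 0 := by positivity
    rw [Matrix.diagonal_mul_diagonal]
    ext i j
    rcases eq_or_ne i j with rfl | hij
    · rw [Matrix.diagonal_apply_eq, Matrix.one_apply_eq]
      by_cases hp : i = Fin.last m
      · simp only [hp, if_true]
        push_cast
        exact mul_inv_cancel₀ (by positivity)
      · simp [hp]
    · rw [Matrix.diagonal_apply_ne _ hij, Matrix.one_apply_ne hij]
  have hD'D : Matrix.diagonal (fun p : Fin (m+1) => if p = Fin.last m then ((z+1:ℕ):ℝ)⁻¹ else 1)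
      * Matrix.diagonal (fun p : Fin (m+1) => if p = Fin.last m then ((z+1:ℕ):ℝ) else 1) = 1 := by
    have hz : ((z+1:ℕ):ℝ) ≠ 0 := by positivity
    rw [Matrix.diagonal_mul_diagonal]
    ext i j
    rcases eq_or_ne i j with rfl | hij
    · rw [Matrix.diagonal_apply_eq, Matrix.one_apply_eq]
      by_cases hp : i = Fin.last m
      · simp only [hp, if_true]
        push_cast
        exact inv_mul_cancel₀ (by positivity)
      · simp [hp]
    · rw [Matrix.diagonal_apply_ne _ hij, Matrix.one_apply_ne hij]
  have hBt : Bt m z a = S0 m z * (S0 m z * Bt m z a * S0 m z) * S0 m z := by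
    rw [show S0 m z * (S0 m z * Bt m z a * S0 m z) * S0 m z
      = (S0 m z * S0 m z) * Bt m z a * (S0 m z * S0 m z) from by noncomm_ring]
    rw [hSS, one_mul, mul_one]
  conv_lhs => rw [hBt]
  rw [charpoly_conj_gen _ _ _ hSS hSS]
  rw [← Matrix.fromBlocks_toBlocks (S0 m z * Bt m z a * S0 m z), T11, T12, T22,
    Matrix.charpoly_fromBlocks_zero₁₂, charpoly_zero,
    charpoly_conj_gen _ _ _ hDD' hD'D, charpoly_compM]

lemma charpoly_blowup :
    (Matrix.of fun i j : Fin (m+1+z) =>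
      (if min (j:ℕ) m = m then ((z+1:ℕ):ℝ)⁻¹ else 1) *
        (if min (j:ℕ) m + 1 = min (i:ℕ) m then 1
          else if min (j:ℕ) m = m then a (min (i:ℕ) m) else 0)).charpoly
    = (X ^ (m+1) - ∑ k ∈ Finset.range (m+1), C (a k) * X ^ k) * X ^ z := by
  have hf : ∀ i : Fin (m+1+z), ft m z (finSumFinEquiv.symm i) = min (i:ℕ) m := by
    intro i
    rcases h : (finSumFinEquiv.symm i : Fin (m+1) ⊕ Fin z) with p | q
    · have hi : i = finSumFinEquiv (Sum.inl p) := by rw [← h, Equiv.apply_symm_apply]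
      subst hi
      simp only [ft, Sum.elim_inl, finSumFinEquiv_apply_left, Fin.coe_castAdd]
      have := p.is_le
      omega
    · have hi : i = finSumFinEquiv (Sum.inr q) := by rw [← h, Equiv.apply_symm_apply]
      subst hi
      simp only [ft, Sum.elim_inr, finSumFinEquiv_apply_right, Fin.coe_natAdd]
      omega
  have heq : (Matrix.of fun i j : Fin (m+1+z) =>
      (if min (j:ℕ) m = m then ((z+1:ℕ):ℝ)⁻¹ else 1) *
        (if min (j:ℕ) m + 1 = min (i:ℕ) m then 1
          else if min (j:ℕ) m = m then a (min (i:ℕ) m) else 0))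
      = Matrix.reindex finSumFinEquiv finSumFinEquiv (Bt m z a) := by
    ext i j
    rw [Matrix.reindex_apply, Matrix.submatrix_apply, Matrix.of_apply]
    show _ = Bt m z a _ _
    rw [Bt, Matrix.of_apply, cc, hf, hf]
  rw [heq, Matrix.charpoly_reindex, charpoly_Bt]

end blowup

theorem stmt8 (n : ℕ) (μ : Fin (n + 1) → ℝ)
    (hpos : 0 < μ 0)
    (hle : ∀ i : Fin (n + 1), i ≠ 0 → μ i ≤ 0)
    (hs : 0 ≤ ∑ i, μ i) :
    ∃ A : Matrix (Fin (n + 1)) (Fin (n + 1)) ℝ,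
      MatNonneg A ∧ MatIrred A ∧ A.charpoly = ∏ i, (X - C (μ i)) := by
  classical
  set s : Finset (Fin (n+1)) := Finset.univ.filter (fun i => μ i < 0) with hs_def
  have hmem : ∀ i, i ∈ s ↔ μ i < 0 := by
    intro i
    simp [hs_def]
  have h0s : (0 : Fin (n+1)) ∉ s := fun h => absurd ((hmem 0).1 h) (not_lt.2 hpos.le)
  have hsub0 : s ⊆ Finset.univ.erase 0 := by
    intro i hi
    refine Finset.mem_erase.2 ⟨?_, Finset.mem_univ i⟩
    intro h
    exact h0s (h ▸ hi)
  have hcard : s.card ≤ n := by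
    have h1 := Finset.card_le_card hsub0
    rw [Finset.card_erase_of_mem (Finset.mem_univ 0), Finset.card_univ, Fintype.card_fin] at h1
    omega
  set sc := s.card with hsc_def
  set z := n - sc with hz_def
  have hmz : sc + 1 + z = n + 1 := by omega
  have hsumz : ∑ i ∈ Finset.univ.erase 0, μ i = ∑ i ∈ s, μ i := by
    refine (Finset.sum_subset hsub0 ?_).symm
    intro i hi his
    have h1 : μ i ≤ 0 := hle i (Finset.mem_erase.1 hi).1
    have h2 : ¬ μ i < 0 := fun h => his ((hmem i).2 h)
    linarith
  have hsum_univ : ∑ i, μ i = μ 0 + ∑ i ∈ s, μ i := by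
    rw [← Finset.add_sum_erase _ _ (Finset.mem_univ 0), hsumz]
  have hlam : ∑ i ∈ s, -μ i ≤ μ 0 := by
    rw [Finset.sum_neg_distrib]
    linarith [hsum_univ ▸ hs]
  have hbpos : ∀ i ∈ s, 0 < -μ i := fun i hi => neg_pos.2 ((hmem i).1 hi)
  obtain ⟨hco, -⟩ := keyA (fun i => -μ i) (μ 0) s (fun i hi => (hbpos i hi).le) hlam
  set q : ℝ[X] := ∏ i ∈ s, (X + C (-μ i)) with hq_def
  set r : ℝ[X] := X ^ (sc + 1) - (X - C (μ 0)) * q with hr_def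
  set a : ℕ → ℝ := fun k => r.coeff k with ha_def
  have ha_nonneg : ∀ k, 0 ≤ a k := hco
  have ha0 : 0 < a 0 := by
    have h1 : ((X - C (μ 0)) * q).coeff 0 = -μ 0 * ∏ i ∈ s, (-μ i) := by
      rw [Polynomial.coeff_zero_eq_eval_zero]
      rw [Polynomial.eval_mul, Polynomial.eval_prod]
      simp [hq_def]
    have h2 : a 0 = μ 0 * ∏ i ∈ s, (-μ i) := by
      rw [ha_def]
      simp only [hr_def, Polynomial.coeff_sub, h1, Polynomial.coeff_X_pow,
        if_neg (by omega : ¬ (0 = sc + 1))]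
      ring
    rw [h2]
    exact mul_pos hpos (Finset.prod_pos hbpos)
  have hmon : ((X - C (μ 0)) * q).Monic :=
    (monic_X_sub_C (μ 0)).mul (monic_prod_of_monic _ _ fun i _ => monic_X_add_C (-μ i))
  have hdeg : ((X - C (μ 0)) * q).natDegree = sc + 1 := by
    rw [(monic_X_sub_C (μ 0)).natDegree_mul
        (monic_prod_of_monic _ _ fun i _ => monic_X_add_C (-μ i)),
      natDegree_X_sub_C, natDegree_prod_of_monic _ _ fun i _ => monic_X_add_C (-μ i)]
    rw [Finset.sum_congr rfl fun i (_ : i ∈ s) => natDegree_X_add_C (-μ i)]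
    rw [Finset.sum_const, smul_eq_mul, mul_one]
    omega
  have hrk : ∀ k, sc + 1 ≤ k → r.coeff k = 0 := by
    intro k hk
    rcases eq_or_lt_of_le hk with h | h
    · rw [hr_def, ← h]
      rw [Polynomial.coeff_sub, Polynomial.coeff_X_pow, if_pos rfl, ← hdeg,
        hmon.coeff_natDegree]
      ring
    · rw [hr_def]
      simp only [Polynomial.coeff_sub, Polynomial.coeff_X_pow]
      rw [if_neg (by omega), Polynomial.coeff_eq_zero_of_natDegree_lt (by rw [hdeg]; omega)]
      ring
  have hr_sum : ∑ k ∈ Finset.range (sc + 1), C (a k) * X ^ k = r := by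
    apply Polynomial.ext
    intro j
    rw [Polynomial.finset_sum_coeff]
    have hterm : ∀ k ∈ Finset.range (sc + 1),
        (C (a k) * X ^ k).coeff j = if j = k then a k else 0 := by
      intro k _
      rw [Polynomial.coeff_C_mul, Polynomial.coeff_X_pow]
      split <;> ring
    rw [Finset.sum_congr rfl hterm]
    have : ∑ k ∈ Finset.range (sc + 1), (if j = k then a k else 0)
        = if j ∈ Finset.range (sc + 1) then a j else 0 := Finset.sum_ite_eq _ _ _
    rw [this]
    by_cases hj : j ∈ Finset.range (sc + 1)
    · rw [if_pos hj]
    · rw [if_neg hj]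
      exact (hrk j (by simpa using hj)).symm
  -- the matrix
  set A : Matrix (Fin (n+1)) (Fin (n+1)) ℝ := Matrix.of fun i j =>
    (if min (j:ℕ) sc = sc then ((z+1:ℕ):ℝ)⁻¹ else 1) *
      (if min (j:ℕ) sc + 1 = min (i:ℕ) sc then 1
        else if min (j:ℕ) sc = sc then a (min (i:ℕ) sc) else 0) with hA_def
  have hw : ∀ j : Fin (n+1), 0 < (if min (j:ℕ) sc = sc then ((z+1:ℕ):ℝ)⁻¹ else 1) := by
    intro j
    split
    · positivity
    · exact one_pos
  have hApos : ∀ i j : Fin (n+1), min (j:ℕ) sc + 1 = min (i:ℕ) sc → 0 < A i j := by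
    intro i j h
    rw [hA_def]
    simp only [Matrix.of_apply]
    rw [if_pos h]
    exact mul_pos (hw j) one_pos
  have hApos0 : ∀ i j : Fin (n+1), min (i:ℕ) sc = 0 → min (j:ℕ) sc = sc → 0 < A i j := by
    intro i j hi hj
    have hne : ¬(min (j:ℕ) sc + 1 = min (i:ℕ) sc) := by omega
    rw [hA_def]
    simp only [Matrix.of_apply]
    rw [if_neg hne, if_pos hj, if_pos hj, hi]
    exact mul_pos (by positivity) ha0
  refine ⟨A, ?_, ?_, ?_⟩
  · -- nonneg
    intro i j
    rw [hA_def]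
    simp only [Matrix.of_apply]
    refine mul_nonneg (hw j).le ?_
    split
    · exact zero_le_one
    · split
      · exact ha_nonneg _
      · exact le_refl 0
  · -- irreducible
    intro i j hij
    have Ldown : ∀ (d : ℕ) (i j : Fin (n+1)), min (i:ℕ) sc = min (j:ℕ) sc + 1 + d →
        Relation.TransGen (fun a b => 0 < A a b) i j := by
      intro d
      induction d with
      | zero => exact fun i j h => Relation.TransGen.single (hApos i j (by omega))
      | succ d ih =>
        intro i j h
        have h1 : min (i:ℕ) sc ≤ sc := min_le_right _ _
        have hlt : min (j:ℕ) sc + 1 + d < n + 1 := by omega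
        set t : Fin (n+1) := ⟨min (j:ℕ) sc + 1 + d, hlt⟩ with ht_def
        have hft : min (t:ℕ) sc = min (j:ℕ) sc + 1 + d := by
          rw [ht_def]
          simp only []
          omega
        exact Relation.TransGen.head (hApos i t (by omega)) (ih t j (by omega))
    have hv0 : ((0 : Fin (n+1)) : ℕ) = 0 := rfl
    by_cases hsc0 : sc = 0
    · exact Relation.TransGen.single (hApos0 i j (by omega) (by omega))
    · have h0j : Relation.TransGen (fun a b => 0 < A a b) (0 : Fin (n+1)) j := by
        by_cases hj : min (j:ℕ) sc = sc
        · exact Relation.TransGen.single (hApos0 0 j (by rw [hv0]; omega) hj)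
        · set t : Fin (n+1) := ⟨n, by omega⟩ with ht_def
          have htv : (t:ℕ) = n := rfl
          have hts : min (t:ℕ) sc = sc := by rw [htv]; omega
          refine Relation.TransGen.head (hApos0 0 t (by rw [hv0]; omega) hts) ?_
          exact Ldown (sc - 1 - min (j:ℕ) sc) t j (by omega)
      by_cases hi : i = 0
      · exact hi ▸ h0j
      · have hiv : (i:ℕ) ≠ 0 := fun h => hi (Fin.ext h)
        refine Relation.TransGen.trans (Ldown (min (i:ℕ) sc - 1) i 0 ?_) h0j
        rw [hv0]
        omega
  · -- charpoly
    have hAeq : A = Matrix.reindex (finCongr hmz) (finCongr hmz)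
        (Matrix.of fun i j : Fin (sc+1+z) =>
          (if min (j:ℕ) sc = sc then ((z+1:ℕ):ℝ)⁻¹ else 1) *
            (if min (j:ℕ) sc + 1 = min (i:ℕ) sc then 1
              else if min (j:ℕ) sc = sc then a (min (i:ℕ) sc) else 0)) := by
      ext i j
      rw [hA_def, Matrix.reindex_apply, Matrix.submatrix_apply, Matrix.of_apply, Matrix.of_apply]
      simp [finCongr_symm, finCongr_apply, Fin.coe_cast]
    rw [hAeq, Matrix.charpoly_reindex, charpoly_blowup sc z a, hr_sum]
    have hXr : X ^ (sc + 1) - r = (X - C (μ 0)) * q := by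
      rw [hr_def]
      ring
    rw [hXr]
    -- product identity
    have h1 : ∏ i ∈ s, (X - C (μ i)) = q := by
      rw [hq_def]
      refine Finset.prod_congr rfl fun i _ => ?_
      rw [map_neg, sub_eq_add_neg]
    have h0c : (0 : Fin (n+1)) ∈ sᶜ := Finset.mem_compl.2 h0s
    have h3 : ∏ i ∈ sᶜ.erase 0, (X - C (μ i)) = (X : ℝ[X]) ^ z := by
      have hall : ∀ i ∈ sᶜ.erase 0, X - C (μ i) = (X : ℝ[X]) := by
        intro i hi
        obtain ⟨hne, hci⟩ := Finset.mem_erase.1 hi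
        have hle' : μ i ≤ 0 := hle i hne
        have hnl : ¬ μ i < 0 := fun h => (Finset.mem_compl.1 hci) ((hmem i).2 h)
        have : μ i = 0 := le_antisymm hle' (not_lt.1 hnl)
        rw [this, map_zero, sub_zero]
      rw [Finset.prod_congr rfl hall, Finset.prod_const]
      congr 1
      rw [Finset.card_erase_of_mem h0c, Finset.card_compl, Fintype.card_fin]
      omega
    have h2 : ∏ i ∈ sᶜ, (X - C (μ i)) = (X - C (μ 0)) * X ^ z := by
      rw [← Finset.mul_prod_erase _ _ h0c, h3]
    rw [← Finset.prod_mul_prod_compl s (fun i => X - C (μ i)), h1, h2]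
    ring
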